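/- Let z = μ_z + w_z with μ_z a discrete random vector in ℝ^d and w_z ∼ N(0, Σ_z) independent of μ_z, Σ_z positive semidefinite. Then for every integer t ≥ 1 and every v ∈ ℝ^d: E⟨z, v⟩^(2t) ≥ E⟨μ_z, v⟩^(2t) + (vᵀΣ_z v)^t · t^t / 2^t. -/

import Mathlib

open MeasureTheory ProbabilityTheory Matrix
open Real
open scoped NNReal ENNReal

lemma integrable_pow_mul_exp {b : ℝ} (hb : 0 < b) (n : ℕ) :
    Integrable (fun x : ℝ => x ^ n * Real.exp (-b * x ^ 2)) := by
  have h := integrable_rpow_mul_exp_neg_mul_sq hb (s := (n : ℝ)) (lt_of_lt_of_le (by norm_num) (Nat.cast_nonneg n))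
  simpa [Real.rpow_natCast] using h

lemma gauss_rec {b : ℝ} (hb : 0 < b) (n : ℕ) :
    ∫ x : ℝ, x ^ (n + 2) * Real.exp (-b * x ^ 2)
      = ((n + 1 : ℝ) / (2 * b)) * ∫ x : ℝ, x ^ n * Real.exp (-b * x ^ 2) := by
  set f : ℝ → ℝ := fun x => x ^ (n + 1) * Real.exp (-b * x ^ 2) with hf
  set f' : ℝ → ℝ := fun x =>
    (n + 1 : ℝ) * (x ^ n * Real.exp (-b * x ^ 2)) - (2 * b) * (x ^ (n + 2) * Real.exp (-b * x ^ 2))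
    with hf'
  have hderiv : ∀ x : ℝ, HasDerivAt f (f' x) x := by
    intro x
    have h1 : HasDerivAt (fun x : ℝ => x ^ (n + 1)) ((n + 1 : ℝ) * x ^ n) x := by
      simpa using hasDerivAt_pow (n + 1) x
    have h2 : HasDerivAt (fun x : ℝ => Real.exp (-b * x ^ 2)) ((-b * (2 * x)) * Real.exp (-b * x ^ 2)) x := by
      have h3 : HasDerivAt (fun x : ℝ => -b * x ^ 2) (-b * (2 * x)) x := by
        simpa using (hasDerivAt_pow 2 x).const_mul (-b)
      simpa [mul_comm] using h3.exp
    have : HasDerivAt (fun x : ℝ => x ^ (n + 1) * Real.exp (-b * x ^ 2)) _ x := h1.mul h2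
    convert this using 1
    simp only [f']
    ring
  have hint : Integrable f' := by
    exact ((integrable_pow_mul_exp hb n).const_mul _).sub
      ((integrable_pow_mul_exp hb (n + 2)).const_mul _)
  have hintf : Integrable f := integrable_pow_mul_exp hb (n + 1)
  have h0 : ∫ x, f' x = 0 := integral_eq_zero_of_hasDerivAt_of_integrable hderiv hint hintf
  rw [hf'] at h0
  rw [integral_sub ((integrable_pow_mul_exp hb n).const_mul _)
    ((integrable_pow_mul_exp hb (n + 2)).const_mul _)] at h0
  rw [integral_const_mul, integral_const_mul] at h0
  have h2b : (2 * b) ≠ 0 := by positivity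
  rw [div_mul_eq_mul_div, eq_div_iff h2b]
  linarith

noncomputable def Dfac (t : ℕ) : ℝ := ∏ i ∈ Finset.range t, (2 * (i : ℝ) + 1)

lemma Dfac_nonneg (t : ℕ) : 0 ≤ Dfac t :=
  Finset.prod_nonneg fun i _ => by positivity

-- pdf rewrite of gaussianReal integrals
lemma gauss_integral_eq {V : ℝ≥0} (hV : V ≠ 0) (g : ℝ → ℝ) :
    ∫ x, g x ∂(gaussianReal 0 V) = ∫ x, gaussianPDFReal 0 V x * g x := by
  rw [gaussianReal_of_var_ne_zero 0 hV]
  have hm : Measurable fun x => (gaussianPDFReal 0 V x).toNNReal :=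
    (measurable_gaussianPDFReal 0 V).real_toNNReal
  have : gaussianPDF 0 V = fun x => ((gaussianPDFReal 0 V x).toNNReal : ℝ≥0∞) := by
    funext x; rfl
  rw [this, integral_withDensity_eq_integral_smul hm]
  congr 1
  funext x
  simp [NNReal.smul_def, Real.coe_toNNReal _ (gaussianPDFReal_nonneg 0 V x)]

lemma gauss_integrable {V : ℝ≥0} (hV : V ≠ 0) (n : ℕ) :
    Integrable (fun x : ℝ => x ^ n) (gaussianReal 0 V) := by
  rw [gaussianReal_of_var_ne_zero 0 hV]
  have hm : Measurable fun x => (gaussianPDFReal 0 V x).toNNReal :=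
    (measurable_gaussianPDFReal 0 V).real_toNNReal
  have : gaussianPDF 0 V = fun x => ((gaussianPDFReal 0 V x).toNNReal : ℝ≥0∞) := by
    funext x; rfl
  rw [this, integrable_withDensity_iff_integrable_smul hm]
  have hb : (0:ℝ) < (2 * (V:ℝ))⁻¹ := by
    have : (0:ℝ) < (V:ℝ) := by positivity
    positivity
  have h := (integrable_rpow_mul_exp_neg_mul_sq hb (s := (n : ℝ))
    (lt_of_lt_of_le (by norm_num) (Nat.cast_nonneg n))).const_mul (√(2 * π * (V:ℝ)))⁻¹
  refine h.congr (Filter.Eventually.of_forall fun x => ?_)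
  have hcoe : ((gaussianPDFReal 0 V x).toNNReal : ℝ) = gaussianPDFReal 0 V x :=
    Real.coe_toNNReal _ (gaussianPDFReal_nonneg 0 V x)
  simp only [NNReal.smul_def, smul_eq_mul]
  rw [hcoe]
  simp only [gaussianPDFReal, Real.rpow_natCast]
  rw [neg_mul]
  ring_nf




lemma gauss_moment_rec {V : ℝ≥0} (hV : V ≠ 0) (n : ℕ) :
    ∫ x, x ^ (n + 2) ∂(gaussianReal 0 V)
      = ((n : ℝ) + 1) * V * ∫ x, x ^ n ∂(gaussianReal 0 V) := by
  have hVpos : (0:ℝ) < V := NNReal.coe_pos.mpr (zero_lt_iff.mpr hV)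
  have hb : (0:ℝ) < (2 * (V:ℝ))⁻¹ := by positivity
  have hpdf : ∀ k : ℕ, ∫ x, gaussianPDFReal 0 V x * x ^ k
      = (√(2 * π * (V:ℝ)))⁻¹ * ∫ x, x ^ k * Real.exp (-(2 * (V:ℝ))⁻¹ * x ^ 2) := by
    intro k
    rw [← integral_const_mul]
    congr 1; funext x
    simp only [gaussianPDFReal]
    rw [neg_mul]
    ring_nf
  rw [gauss_integral_eq hV, gauss_integral_eq hV, hpdf, hpdf, gauss_rec hb n]
  have h2 : ((n:ℝ) + 1) / (2 * (2 * (V:ℝ))⁻¹) = ((n:ℝ) + 1) * V := by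
    field_simp
  rw [h2]; ring

lemma gauss_moment (V : ℝ≥0) (t : ℕ) :
    ∫ x, x ^ (2 * t) ∂(gaussianReal 0 V) = (V : ℝ) ^ t * Dfac t := by
  by_cases hV : V = 0
  · subst hV
    rw [gaussianReal_zero_var, integral_dirac]
    cases t with
    | zero => simp [Dfac]
    | succ s => simp [Dfac, pow_succ, zero_pow]
  · induction t with
    | zero => simp [Dfac]
    | succ s ih =>
      have : 2 * (s + 1) = 2 * s + 2 := by ring
      rw [this, gauss_moment_rec hV (2 * s), ih]
      simp only [Dfac, Finset.prod_range_succ]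
      push_cast
      ring

lemma Dnat_eq (t : ℕ) : 2 ^ t * t.factorial * (∏ i ∈ Finset.range t, (2 * i + 1)) = (2 * t).factorial := by
  induction t with
  | zero => simp
  | succ s ih =>
    rw [Finset.prod_range_succ]
    have h1 : 2 * (s + 1) = (2 * s + 1) + 1 := by ring
    rw [h1, Nat.factorial_succ, Nat.factorial_succ, Nat.factorial_succ, ← ih]
    ring

lemma Dfac_ge (t : ℕ) : (t : ℝ) ^ t / 2 ^ t ≤ Dfac t := by
  have key : t ^ t * t.factorial ≤ (2 * t).factorial := by
    calc t ^ t * t.factorial ≤ (t + 1) ^ t * t.factorial := by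
          exact Nat.mul_le_mul_right _ (Nat.pow_le_pow_left (Nat.le_succ t) t)
      _ ≤ (t + 1).ascFactorial t * t.factorial := by
          exact Nat.mul_le_mul_right _ (Nat.pow_succ_le_ascFactorial (t+1) t)
      _ = (2 * t).factorial := by
          rw [mul_comm, Nat.factorial_mul_ascFactorial]
          congr 1; ring
  rw [← Dnat_eq t] at key
  have key2 : t ^ t ≤ 2 ^ t * (∏ i ∈ Finset.range t, (2 * i + 1)) := by
    have hf : 0 < t.factorial := t.factorial_pos
    refine Nat.le_of_mul_le_mul_right ?_ hf
    calc t ^ t * t.factorial ≤ 2 ^ t * t.factorial * (∏ i ∈ Finset.range t, (2 * i + 1)) := key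
      _ = 2 ^ t * (∏ i ∈ Finset.range t, (2 * i + 1)) * t.factorial := by ring
  have : ((t:ℝ)) ^ t ≤ 2 ^ t * Dfac t := by
    have := (Nat.cast_le (α := ℝ)).mpr key2
    push_cast at this
    simpa [Dfac] using this
  rw [div_le_iff₀ (by positivity)]
  linarith

lemma pointwise_sym (a b : ℝ) {t : ℕ} (ht : 1 ≤ t) :
    2 * a ^ (2 * t) + 2 * b ^ (2 * t) ≤ (a + b) ^ (2 * t) + (a - b) ^ (2 * t) := by
  have hexp : (a + b) ^ (2 * t) + (a - b) ^ (2 * t)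
      = ∑ k ∈ Finset.range (2 * t + 1),
          (a ^ k * b ^ (2 * t - k) * (1 + (-1 : ℝ) ^ (2 * t - k)) * (2 * t).choose k) := by
    have h1 := add_pow a b (2 * t)
    have h2 := add_pow a (-b) (2 * t)
    rw [sub_eq_add_neg, h2, h1, ← Finset.sum_add_distrib]
    congr 1; funext k
    rw [neg_pow]
    ring
  rw [hexp]
  have hsub : ({0, 2 * t} : Finset ℕ) ⊆ Finset.range (2 * t + 1) := by
    intro x hx
    simp only [Finset.mem_insert, Finset.mem_singleton] at hx
    rcases hx with h | h <;> simp [h]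
  have hterm : ∀ k ∈ Finset.range (2 * t + 1), k ∉ ({0, 2 * t} : Finset ℕ) →
      0 ≤ a ^ k * b ^ (2 * t - k) * (1 + (-1 : ℝ) ^ (2 * t - k)) * (2 * t).choose k := by
    intro k hk _
    rcases Nat.even_or_odd (2 * t - k) with he | ho
    · rcases Nat.even_or_odd k with hke | hko
      · have h1 : (0:ℝ) ≤ a ^ k := hke.pow_nonneg a
        have h2 : (0:ℝ) ≤ b ^ (2 * t - k) := he.pow_nonneg b
        have h3 : ((-1 : ℝ)) ^ (2 * t - k) = 1 := he.neg_one_pow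
        rw [h3]
        positivity
      · exfalso
        rw [Finset.mem_range] at hk
        rw [Nat.even_iff] at he
        rw [Nat.odd_iff] at hko
        omega
    · have h3 : ((-1 : ℝ)) ^ (2 * t - k) = -1 := ho.neg_one_pow
      rw [h3]
      simp
  have hkey := Finset.sum_le_sum_of_subset_of_nonneg hsub hterm
  refine le_trans (le_of_eq ?_) hkey
  have h02 : (0 : ℕ) ≠ 2 * t := by omega
  rw [Finset.sum_pair h02]
  have ht1 : 2 * t - 0 = 2 * t := rfl
  have ht2 : 2 * t - 2 * t = 0 := by omega
  rw [ht1, ht2]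
  simp [Even.neg_one_pow (even_two_mul t)]
  ring




lemma gauss_integrable' (V : ℝ≥0) (n : ℕ) :
    Integrable (fun x : ℝ => x ^ n) (gaussianReal 0 V) := by
  by_cases hV : V = 0
  · subst hV
    rw [gaussianReal_zero_var]
    refine ⟨(measurable_id.pow_const n).aestronglyMeasurable, ?_⟩
    rw [HasFiniteIntegral, lintegral_dirac' _ (by fun_prop)]
    exact ENNReal.coe_lt_top
  · exact gauss_integrable hV n

/-- Moment lower bound: `z = μ_z + w_z` with `μ_z` a discrete random vector in `ℝ^d`
and `w_z ∼ N(0, Σ_z)` independent of `μ_z`, `Σ_z` PSD. For every `t ≥ 1` and `v`: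
`E⟨z, v⟩^(2t) ≥ E⟨μ_z, v⟩^(2t) + (vᵀ Σ_z v)^t t^t / 2^t`. -/
theorem stmt12 {Ω : Type*} [MeasurableSpace Ω] (P : Measure Ω) [IsProbabilityMeasure P]
    {d k : ℕ} (S : Matrix (Fin d) (Fin d) ℝ) (hS : S.PosSemidef)
    (μRV wRV : Ω → (Fin d → ℝ))
    (hμmeas : Measurable μRV) (hwmeas : Measurable wRV)
    (m : Fin k → (Fin d → ℝ)) (hrange : ∀ ω, ∃ j, μRV ω = m j)
    (hindep : IndepFun μRV wRV P)
    (hgauss : ∀ v : Fin d → ℝ,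
      Measure.map (fun ω => wRV ω ⬝ᵥ v) P
        = gaussianReal 0 (Real.toNNReal (v ⬝ᵥ S.mulVec v)))
    (t : ℕ) (ht : 1 ≤ t) (v : Fin d → ℝ) :
    (∫ ω, (μRV ω ⬝ᵥ v) ^ (2 * t) ∂P) + (v ⬝ᵥ S.mulVec v) ^ t * (t : ℝ) ^ t / 2 ^ t
      ≤ ∫ ω, ((μRV ω + wRV ω) ⬝ᵥ v) ^ (2 * t) ∂P := by
  classical
  set X : Ω → ℝ := fun ω => μRV ω ⬝ᵥ v with hX
  set Y : Ω → ℝ := fun ω => wRV ω ⬝ᵥ v with hY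
  set σ : ℝ≥0 := Real.toNNReal (v ⬝ᵥ S.mulVec v) with hσdef
  have hdotm : Measurable fun w : Fin d → ℝ => w ⬝ᵥ v := by
    simp only [dotProduct]
    exact Finset.measurable_sum _ fun i _ => (measurable_pi_apply i).mul_const _
  have hXm : Measurable X := hdotm.comp hμmeas
  have hYm : Measurable Y := hdotm.comp hwmeas
  have hVr : 0 ≤ v ⬝ᵥ S.mulVec v := by
    have := hS.dotProduct_mulVec_nonneg v
    simpa using this
  have hσ : (σ : ℝ) = v ⬝ᵥ S.mulVec v := Real.coe_toNNReal _ hVr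
  have hmapY : Measure.map Y P = gaussianReal 0 σ := hgauss v
  -- nonempty
  have hne : Nonempty Ω := by
    by_contra h
    rw [not_nonempty_iff] at h
    have h1 : P Set.univ = 1 := measure_univ
    rw [Set.eq_empty_of_isEmpty Set.univ, measure_empty] at h1
    exact zero_ne_one h1
  have hk : Nonempty (Fin k) := (hrange (Classical.arbitrary Ω)).elim fun j _ => ⟨j⟩
  set C : ℝ := Finset.univ.sup' Finset.univ_nonempty (fun j => |m j ⬝ᵥ v|) with hC
  have hXb : ∀ ω, |X ω| ≤ C := by
    intro ω
    obtain ⟨j, hj⟩ := hrange ω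
    rw [hX, hC]
    simp only [hj]
    exact Finset.le_sup' (fun j => |m j ⬝ᵥ v|) (Finset.mem_univ j)
  have hC0 : 0 ≤ C := le_trans (abs_nonneg _) (hXb (Classical.arbitrary Ω))
  -- integrability of Y ^ (2 t)
  have hgm2t : AEStronglyMeasurable (fun x : ℝ => x ^ (2 * t)) (Measure.map Y P) :=
    (measurable_id.pow_const _).aestronglyMeasurable
  have hYint : Integrable (fun ω => Y ω ^ (2 * t)) P := by
    have h := (integrable_map_measure hgm2t hYm.aemeasurable).mp
      (by rw [hmapY]; exact gauss_integrable' σ (2 * t))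
    exact h
  have hYmom : ∫ ω, Y ω ^ (2 * t) ∂P = (σ : ℝ) ^ t * Dfac t := by
    have h := integral_map hYm.aemeasurable hgm2t
    rw [hmapY] at h
    rw [← h, gauss_moment]
  have hYmom_ge : (v ⬝ᵥ S.mulVec v) ^ t * (t : ℝ) ^ t / 2 ^ t ≤ ∫ ω, Y ω ^ (2 * t) ∂P := by
    rw [hYmom, ← hσ]
    rw [mul_div_assoc]
    exact mul_le_mul_of_nonneg_left (Dfac_ge t) (pow_nonneg σ.2 t)
  -- integrability of X ^ (2 t)
  have hXint : Integrable (fun ω => X ω ^ (2 * t)) P := by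
    refine Integrable.mono' (integrable_const (C ^ (2 * t)))
      ((hXm.pow_const _).aestronglyMeasurable) (ae_of_all _ fun ω => ?_)
    rw [Real.norm_eq_abs, abs_pow]
    exact pow_le_pow_left₀ (abs_nonneg _) (hXb ω) _
  -- integrability of (X ± Y) ^ (2 t)
  have habs_pow : ∀ y : ℝ, |y| ^ (2 * t) = y ^ (2 * t) := fun y =>
    (even_two_mul t).pow_abs y
  have hpm : ∀ c : ℝ, |c| = 1 → Integrable (fun ω => (X ω + c * Y ω) ^ (2 * t)) P := by
    intro c hc
    refine Integrable.mono' ((integrable_const (2 ^ (2 * t) * C ^ (2 * t))).add (hYint.const_mul (2 ^ (2 * t))))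
      ((hXm.add (hYm.const_mul c)).pow_const _).aestronglyMeasurable
      (ae_of_all _ fun ω => ?_)
    rw [Real.norm_eq_abs, abs_pow]
    have h1 : |X ω + c * Y ω| ≤ C + |Y ω| := by
      calc |X ω + c * Y ω| ≤ |X ω| + |c * Y ω| := abs_add_le _ _
        _ = |X ω| + |Y ω| := by rw [abs_mul, hc, one_mul]
        _ ≤ C + |Y ω| := by linarith [hXb ω]
    calc |X ω + c * Y ω| ^ (2 * t) ≤ (C + |Y ω|) ^ (2 * t) := by
          exact pow_le_pow_left₀ (abs_nonneg _) h1 _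
      _ ≤ (2 * max C |Y ω|) ^ (2 * t) := by
          refine pow_le_pow_left₀ (by positivity) ?_ _
          rw [two_mul]
          exact add_le_add (le_max_left _ _) (le_max_right _ _)
      _ = 2 ^ (2 * t) * max C |Y ω| ^ (2 * t) := mul_pow _ _ _
      _ ≤ 2 ^ (2 * t) * (C ^ (2 * t) + |Y ω| ^ (2 * t)) := by
          refine mul_le_mul_of_nonneg_left ?_ (by positivity)
          rcases max_cases C |Y ω| with ⟨h, _⟩ | ⟨h, _⟩ <;> rw [h] <;>
            nlinarith [pow_nonneg (abs_nonneg (Y ω)) (2 * t), pow_nonneg hC0 (2 * t)]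
      _ = 2 ^ (2 * t) * C ^ (2 * t) + 2 ^ (2 * t) * Y ω ^ (2 * t) := by
          rw [habs_pow]; ring
  have hsum_int : Integrable (fun ω => (X ω + Y ω) ^ (2 * t)) P := by
    have := hpm 1 (by norm_num)
    simpa using this
  have hdiff_int : Integrable (fun ω => (X ω - Y ω) ^ (2 * t)) P := by
    have := hpm (-1) (by norm_num)
    simp only [neg_one_mul, ← sub_eq_add_neg] at this
    exact this
  -- symmetrization
  have hXY : IndepFun X Y P := hindep.comp hdotm hdotm
  have hXnY : IndepFun X (fun ω => -Y ω) P := hXY.comp measurable_id measurable_neg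
  have hmapnY : Measure.map (fun ω => -Y ω) P = gaussianReal 0 σ := by
    have h : Measure.map (Neg.neg ∘ Y) P = (Measure.map Y P).map Neg.neg :=
      (Measure.map_map measurable_neg hYm).symm
    rw [hmapY] at h
    have h2 : (gaussianReal 0 σ).map (Neg.neg : ℝ → ℝ) = gaussianReal 0 σ := by
      have h2' := gaussianReal_map_const_mul (μ := 0) (v := σ) (-1)
      rw [show ((-1 : ℝ) * ·) = (Neg.neg : ℝ → ℝ) from funext fun x => by simp] at h2'
      rw [h2']
      congr 1
      · norm_num
      · ext; norm_num
    rw [h2] at h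
    exact h
  have hpair : Measure.map (fun ω => (X ω, Y ω)) P
      = Measure.map (fun ω => (X ω, -Y ω)) P := by
    rw [(indepFun_iff_map_prod_eq_prod_map_map hXm.aemeasurable hYm.aemeasurable).mp hXY,
      (indepFun_iff_map_prod_eq_prod_map_map hXm.aemeasurable (show AEMeasurable (fun ω => -Y ω) P from hYm.neg.aemeasurable)).mp hXnY,
      hmapY, hmapnY]
  have hsymm : ∫ ω, (X ω + Y ω) ^ (2 * t) ∂P = ∫ ω, (X ω - Y ω) ^ (2 * t) ∂P := by
    have hgm : AEStronglyMeasurable (fun p : ℝ × ℝ => (p.1 + p.2) ^ (2 * t))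
        (Measure.map (fun ω => (X ω, Y ω)) P) :=
      ((measurable_fst.add measurable_snd).pow_const _).aestronglyMeasurable
    have hgm2 : AEStronglyMeasurable (fun p : ℝ × ℝ => (p.1 + p.2) ^ (2 * t))
        (Measure.map (fun ω => (X ω, -Y ω)) P) := by rw [← hpair]; exact hgm
    have h1 := integral_map (hXm.aemeasurable.prodMk hYm.aemeasurable) hgm
    have h2 := integral_map (hXm.aemeasurable.prodMk (show AEMeasurable (fun ω => -Y ω) P from hYm.neg.aemeasurable)) hgm2
    rw [← h1, hpair, h2]
    simp [sub_eq_add_neg]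
  -- main chain
  have hmono : ∫ ω, (2 * X ω ^ (2 * t) + 2 * Y ω ^ (2 * t)) ∂P
      ≤ ∫ ω, ((X ω + Y ω) ^ (2 * t) + (X ω - Y ω) ^ (2 * t)) ∂P := by
    refine integral_mono ((hXint.const_mul 2).add (hYint.const_mul 2))
      (hsum_int.add hdiff_int) fun ω => ?_
    exact pointwise_sym (X ω) (Y ω) ht
  rw [integral_add (hXint.const_mul 2) (hYint.const_mul 2),
    integral_add hsum_int hdiff_int, integral_const_mul, integral_const_mul, ← hsymm] at hmono
  have hfinal : ∫ ω, X ω ^ (2 * t) ∂P + ∫ ω, Y ω ^ (2 * t) ∂P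
      ≤ ∫ ω, (X ω + Y ω) ^ (2 * t) ∂P := by linarith
  have hgoal : ∀ ω, ((μRV ω + wRV ω) ⬝ᵥ v) = X ω + Y ω := fun ω =>
    add_dotProduct _ _ _
  calc (∫ ω, (μRV ω ⬝ᵥ v) ^ (2 * t) ∂P) + (v ⬝ᵥ S.mulVec v) ^ t * (t : ℝ) ^ t / 2 ^ t
      ≤ ∫ ω, X ω ^ (2 * t) ∂P + ∫ ω, Y ω ^ (2 * t) ∂P := by
        exact add_le_add_right hYmom_ge _
    _ ≤ ∫ ω, (X ω + Y ω) ^ (2 * t) ∂P := hfinal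
    _ = ∫ ω, ((μRV ω + wRV ω) ⬝ᵥ v) ^ (2 * t) ∂P := by
        congr 1; funext ω; rw [hgoal ω]
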